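/- For any letters a, b, the operators satisfy ∂_a ∘ Θ_{b,a} - Θ_{b,a} ∘ ∂_a = ∂_b as linear operators on the span of words of length n+1. -/

import Mathlib

open Finsupp

variable {A : Type} [DecidableEq A]

/-- The formal sum of `Finsupp.single w 1` over a list of words. -/
noncomputable def wordSum (l : List (List A)) : List A →₀ ℂ :=
  (l.map fun w => Finsupp.single w (1 : ℂ)).sum

/-- All words obtained from `w` by inserting the letter `a` at one position. -/
def insertions (a : A) : List A → List (List A)
  | [] => [[a]]
  | b :: t => (a :: b :: t) :: (insertions a t).map (b :: ·)

/-- All words obtained from `w` by deleting one occurrence of the letter `a`. -/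
def deletions (a : A) : List A → List (List A)
  | [] => []
  | b :: t => (if b = a then [t] else []) ++ (deletions a t).map (b :: ·)

/-- All words obtained from `w` by replacing one occurrence of `b` by `a`. -/
def replacements (b a : A) : List A → List (List A)
  | [] => []
  | c :: t => (if c = b then [a :: t] else []) ++ (replacements b a t).map (c :: ·)

/-- The insertion operator `sh_a`. -/
noncomputable def shOp (a : A) : (List A →₀ ℂ) →ₗ[ℂ] (List A →₀ ℂ) :=
  Finsupp.linearCombination ℂ (fun w => wordSum (insertions a w))

/-- The deletion operator `∂_a`. -/
noncomputable def delOp (a : A) : (List A →₀ ℂ) →ₗ[ℂ] (List A →₀ ℂ) :=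
  Finsupp.linearCombination ℂ (fun w => wordSum (deletions a w))

/-- The replacement operator `Θ_{b,a}`. -/
noncomputable def repOp (b a : A) : (List A →₀ ℂ) →ₗ[ℂ] (List A →₀ ℂ) :=
  Finsupp.linearCombination ℂ (fun w => wordSum (replacements b a w))

/-- Remove the letter at position `i` of `w` and reinsert it at position `j` (0-based). -/
def moveCard (w : List A) (i j : ℕ) : List A :=
  match w[i]? with
  | Option.none => w
  | Option.some c => (w.eraseIdx i).insertIdx j c

/-- The random-to-random operator applied to a single word: the sum over all ordered
pairs of positions `(i, j)` of removing the letter at position `i` and reinserting it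
at position `j` (the diagonal `i = j` contributes `w.length • w`). -/
noncomputable def r2rWord (w : List A) : List A →₀ ℂ :=
  ∑ i ∈ Finset.range w.length, ∑ j ∈ Finset.range w.length,
    Finsupp.single (moveCard w i j) (1 : ℂ)

/-- The (unnormalized) random-to-random operator `R2R`. -/
noncomputable def r2rOp : (List A →₀ ℂ) →ₗ[ℂ] (List A →₀ ℂ) :=
  Finsupp.linearCombination ℂ r2rWord

/-- Random-to-top on a single word: move the letter at each position to the end. -/
noncomputable def r2tWord (w : List A) : List A →₀ ℂ :=
  ∑ i ∈ Finset.range w.length, Finsupp.single (moveCard w i (w.length - 1)) (1 : ℂ)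

/-- The (unnormalized) random-to-top operator `R2T`. -/
noncomputable def r2tOp : (List A →₀ ℂ) →ₗ[ℂ] (List A →₀ ℂ) :=
  Finsupp.linearCombination ℂ r2tWord

/-- Top-to-random on a single word: move the last letter to each position. -/
noncomputable def t2rWord (w : List A) : List A →₀ ℂ :=
  ∑ j ∈ Finset.range w.length, Finsupp.single (moveCard w (w.length - 1) j) (1 : ℂ)

/-- The (unnormalized) top-to-random operator `T2R`. -/
noncomputable def t2rOp : (List A →₀ ℂ) →ₗ[ℂ] (List A →₀ ℂ) :=
  Finsupp.linearCombination ℂ t2rWord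

lemma wordSum_nil : wordSum ([] : List (List A)) = 0 := rfl

lemma wordSum_cons (x : List A) (l : List (List A)) :
    wordSum (x :: l) = Finsupp.single x (1 : ℂ) + wordSum l := by
  simp [wordSum]

lemma wordSum_append (l₁ l₂ : List (List A)) :
    wordSum (l₁ ++ l₂) = wordSum l₁ + wordSum l₂ := by
  simp [wordSum]

lemma mapDomain_wordSum (g : List A → List A) (l : List (List A)) :
    Finsupp.mapDomain g (wordSum l) = wordSum (l.map g) := by
  induction l with
  | nil => simp [wordSum]
  | cons x t ih =>
      simp [wordSum_cons, Finsupp.mapDomain_add, Finsupp.mapDomain_single, ih]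

lemma delOp_single (a : A) (w : List A) :
    delOp a (Finsupp.single w (1 : ℂ)) = wordSum (deletions a w) := by
  simp [delOp, Finsupp.linearCombination_single]

lemma repOp_single (b a : A) (w : List A) :
    repOp b a (Finsupp.single w (1 : ℂ)) = wordSum (replacements b a w) := by
  simp [repOp, Finsupp.linearCombination_single]

lemma wordSum_deletions_cons (a c : A) (t : List A) :
    wordSum (deletions a (c :: t)) =
      (if c = a then Finsupp.single t (1 : ℂ) else 0) +
        Finsupp.mapDomain (List.cons c) (wordSum (deletions a t)) := by
  rw [deletions, wordSum_append, mapDomain_wordSum]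
  by_cases h : c = a <;> simp [h, wordSum_cons, wordSum_nil]

lemma wordSum_replacements_cons (b a c : A) (t : List A) :
    wordSum (replacements b a (c :: t)) =
      (if c = b then Finsupp.single (a :: t) (1 : ℂ) else 0) +
        Finsupp.mapDomain (List.cons c) (wordSum (replacements b a t)) := by
  rw [replacements, wordSum_append, mapDomain_wordSum]
  by_cases h : c = b <;> simp [h, wordSum_cons, wordSum_nil]

lemma delOp_mapDomain_cons (a c : A) (x : List A →₀ ℂ) :
    delOp a (Finsupp.mapDomain (List.cons c) x) =
      (if c = a then x else 0) + Finsupp.mapDomain (List.cons c) (delOp a x) := by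
  induction x using Finsupp.induction_linear with
  | zero => simp
  | add f g hf hg =>
      rw [Finsupp.mapDomain_add, map_add, hf, hg, map_add, Finsupp.mapDomain_add]
      by_cases h : c = a <;> simp [h] <;> abel
  | single u r =>
      rw [Finsupp.mapDomain_single]
      have h1 : delOp a (Finsupp.single (c :: u) r) = r • wordSum (deletions a (c :: u)) := by
        simp [delOp, Finsupp.linearCombination_single]
      have h2 : delOp a (Finsupp.single u r) = r • wordSum (deletions a u) := by
        simp [delOp, Finsupp.linearCombination_single]
      rw [h1, h2, wordSum_deletions_cons, smul_add, Finsupp.mapDomain_smul]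
      by_cases h : c = a <;> simp [h, Finsupp.smul_single]

lemma repOp_mapDomain_cons (b a c : A) (x : List A →₀ ℂ) :
    repOp b a (Finsupp.mapDomain (List.cons c) x) =
      (if c = b then Finsupp.mapDomain (List.cons a) x else 0) +
        Finsupp.mapDomain (List.cons c) (repOp b a x) := by
  induction x using Finsupp.induction_linear with
  | zero => simp
  | add f g hf hg =>
      rw [Finsupp.mapDomain_add, map_add, hf, hg, Finsupp.mapDomain_add, map_add,
        Finsupp.mapDomain_add]
      by_cases h : c = b <;> simp [h] <;> abel
  | single u r =>
      rw [Finsupp.mapDomain_single]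
      have h1 : repOp b a (Finsupp.single (c :: u) r) =
          r • wordSum (replacements b a (c :: u)) := by
        simp [repOp, Finsupp.linearCombination_single]
      have h2 : repOp b a (Finsupp.single u r) = r • wordSum (replacements b a u) := by
        simp [repOp, Finsupp.linearCombination_single]
      rw [h1, h2, wordSum_replacements_cons, smul_add, Finsupp.mapDomain_smul,
        Finsupp.mapDomain_single]
      by_cases h : c = b <;> simp [h, Finsupp.smul_single]

lemma key (a b : A) : ∀ w : List A,
    delOp a (wordSum (replacements b a w)) =
      repOp b a (wordSum (deletions a w)) + wordSum (deletions b w)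
  | [] => by simp [deletions, replacements, wordSum_nil]
  | c :: t => by
      have IH := key a b t
      rw [wordSum_replacements_cons, wordSum_deletions_cons a, map_add, map_add,
        delOp_mapDomain_cons, repOp_mapDomain_cons, IH, Finsupp.mapDomain_add,
        wordSum_deletions_cons b]
      have hA : delOp a (if c = b then Finsupp.single (a :: t) (1 : ℂ) else 0) =
          if c = b then wordSum (deletions a (a :: t)) else 0 := by
        by_cases h : c = b <;> simp [h, delOp_single]
      have hB : repOp b a (if c = a then Finsupp.single t (1 : ℂ) else 0) =
          if c = a then wordSum (replacements b a t) else 0 := by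
        by_cases h : c = a <;> simp [h, repOp_single]
      rw [hA, hB, wordSum_deletions_cons a a, if_pos rfl]
      by_cases hb : c = b <;> by_cases ha : c = a
      · simp [hb, ha, ha.symm.trans hb]; try abel
      · have hba : ¬ b = a := fun h => ha (hb.trans h)
        have hab : ¬ a = b := fun h => hba h.symm
        simp [hb, ha, hba, hab]; try abel
      · have hab : ¬ a = b := fun h => hb (ha.trans h)
        simp [hb, ha, hab]; try abel
      · simp [hb, ha]; try abel

/-- **Lemma 36, Equation (15).** On words of length `n + 1`,
`∂_a ∘ Θ_{b,a} - Θ_{b,a} ∘ ∂_a = ∂_b`. -/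
theorem del_comp_rep_sub_rep_comp_del (a b : A) (n : ℕ) (w : List A)
    (hw : w.length = n + 1) :
    delOp a (repOp b a (Finsupp.single w (1 : ℂ))) -
      repOp b a (delOp a (Finsupp.single w (1 : ℂ))) =
    delOp b (Finsupp.single w (1 : ℂ)) := by
  rw [repOp_single, delOp_single, delOp_single, key a b w]
  abel
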